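/- Let E be a unital trace-preserving completely positive map on a finite-dimensional Hilbert space and P an orthogonal projection with rank(E(P)) = rank(P). Then E†∘E(P) = P. -/

import Mathlib

open Finset Matrix ComplexOrder

/-- Complete positivity via the existence of a Kraus representation. -/
def IsCP {I J : Type*} [Fintype I] [Fintype J]
    (E : Matrix I I ℂ →ₗ[ℂ] Matrix J J ℂ) : Prop :=
  ∃ (r : ℕ) (K : Fin r → Matrix J I ℂ), ∀ X, E X = ∑ a, K a * X * (K a)ᴴ


/-- Trace pairing is nondegenerate. -/
lemma my_trace_ext {n : ℕ} {A B : Matrix (Fin n) (Fin n) ℂ}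
    (h : ∀ τ, (A * τ).trace = (B * τ).trace) : A = B := by
  ext i j
  have := h (single j i 1)
  simpa [Matrix.trace, Matrix.diag, mul_apply, Matrix.single, of_apply, ite_and,
    Finset.sum_ite_eq] using this

lemma my_trace_ct_self_zero {m k : ℕ} {B : Matrix (Fin m) (Fin k) ℂ}
    (h : (Bᴴ * B).trace = 0) : B = 0 := by
  have hnn : ∀ j ∈ Finset.univ, (0:ℂ) ≤ (Bᴴ * B) j j := fun j _ => by
    simp only [mul_apply, conjTranspose_apply]
    exact Finset.sum_nonneg fun i _ => star_mul_self_nonneg _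
  have hdiag : ∀ j, (Bᴴ * B) j j = 0 := fun j =>
    (Finset.sum_eq_zero_iff_of_nonneg hnn).mp h j (Finset.mem_univ j)
  ext i j
  have h0 : dotProduct (star (fun k => B k j)) (fun k => B k j) = 0 := by
    simpa [dotProduct, conjTranspose_apply, mul_apply] using hdiag j
  simpa using congrFun (dotProduct_star_self_eq_zero.mp h0) i

open scoped MatrixOrder in
/-- A positive semidefinite matrix with zero trace is zero. -/
lemma my_psd_trace_zero {n : ℕ} {A : Matrix (Fin n) (Fin n) ℂ} (hA : A.PosSemidef)
    (h : A.trace = 0) : A = 0 := by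
  have hs : CFC.sqrt A * CFC.sqrt A = A := CFC.sqrt_mul_sqrt_self A hA.nonneg
  have hherm : (CFC.sqrt A).IsHermitian := (CFC.sqrt_nonneg A).posSemidef.isHermitian
  have : ((CFC.sqrt A)ᴴ * CFC.sqrt A).trace = 0 := by rw [hherm.eq, hs, h]
  have := my_trace_ct_self_zero this
  rw [← hs, this, mul_zero]

open scoped MatrixOrder in
/-- PSD with PSD of trace-zero product against a hermitian idempotent. -/
lemma my_psd_mul_proj_zero {n : ℕ} {A T : Matrix (Fin n) (Fin n) ℂ} (hA : A.PosSemidef)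
    (hTh : T.IsHermitian) (hTT : T * T = T) (h : (A * T).trace = 0) : A * T = 0 := by
  have hs : CFC.sqrt A * CFC.sqrt A = A := CFC.sqrt_mul_sqrt_self A hA.nonneg
  have hherm : (CFC.sqrt A).IsHermitian := (CFC.sqrt_nonneg A).posSemidef.isHermitian
  set S := CFC.sqrt A with hS
  have key : ((S * T)ᴴ * (S * T)).trace = 0 := by
    have : (S * T)ᴴ * (S * T) = T * A * T := by
      rw [conjTranspose_mul, hherm.eq, hTh.eq, ← hs]
      noncomm_ring
    rw [this, Matrix.trace_mul_cycle, hTT, Matrix.trace_mul_comm, h]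
  have hST : S * T = 0 := my_trace_ct_self_zero key
  calc A * T = S * (S * T) := by rw [← mul_assoc, hs]
  _ = 0 := by rw [hST, mul_zero]


lemma my_herm_trace_eq_sum {n : ℕ} {A : Matrix (Fin n) (Fin n) ℂ} (hA : A.IsHermitian) :
    A.trace = ∑ i, (hA.eigenvalues i : ℂ) := by
  conv_lhs => rw [hA.spectral_theorem, Unitary.conjStarAlgAut_apply]
  rw [Matrix.trace_mul_cycle, Matrix.mem_unitaryGroup_iff'.mp hA.eigenvectorUnitary.2,
    one_mul, Matrix.trace_diagonal]
  rfl

lemma my_herm_mul_self {n : ℕ} {A : Matrix (Fin n) (Fin n) ℂ} (hA : A.IsHermitian)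
    (h01 : ∀ i, hA.eigenvalues i = 0 ∨ hA.eigenvalues i = 1) : A * A = A := by
  set U : Matrix (Fin n) (Fin n) ℂ := (hA.eigenvectorUnitary : Matrix (Fin n) (Fin n) ℂ)
    with hUdef
  set D : Matrix (Fin n) (Fin n) ℂ := diagonal (RCLike.ofReal ∘ hA.eigenvalues) with hDdef
  have hUU : star U * U = 1 := Matrix.mem_unitaryGroup_iff'.mp hA.eigenvectorUnitary.2
  have hDD : D * D = D := by
    rw [hDdef, diagonal_mul_diagonal]
    refine congrArg diagonal (funext fun i => ?_)
    rcases h01 i with h | h <;> simp [h]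
  have hspec : A = U * D * star U := hA.spectral_theorem
  calc A * A = U * (D * ((star U * U) * D)) * star U := by rw [hspec]; noncomm_ring
  _ = U * (D * D) * star U := by rw [hUU, one_mul]
  _ = A := by rw [hDD, ← hspec]

lemma my_eig_le_one {n : ℕ} {Q : Matrix (Fin n) (Fin n) ℂ} (hQh : Q.IsHermitian)
    (hQ1 : (1 - Q).PosSemidef) (i : Fin n) : hQh.eigenvalues i ≤ 1 := by
  set v : Fin n → ℂ := ⇑(hQh.eigenvectorBasis i) with hvdef
  have h := hQ1.re_dotProduct_nonneg v
  have hQv : Q *ᵥ v = (hQh.eigenvalues i) • v := hQh.mulVec_eigenvectorBasis i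
  have hv : star v ⬝ᵥ v = 1 := by
    have hn := hQh.eigenvectorBasis.orthonormal.1 i
    have h2 : (inner ℂ (hQh.eigenvectorBasis i) (hQh.eigenvectorBasis i) : ℂ) = 1 := by
      rw [inner_self_eq_norm_sq_to_K, hn]; simp
    rw [dotProduct_comm]; exact h2
  rw [sub_mulVec, one_mulVec, dotProduct_sub, hQv, dotProduct_smul, map_sub,
    RCLike.smul_re, hv] at h
  simp only [RCLike.one_re] at h
  linarith

lemma my_proj_eigs {n : ℕ} {P : Matrix (Fin n) (Fin n) ℂ} (hPh : P.IsHermitian)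
    (hPP : P * P = P) (i : Fin n) : hPh.eigenvalues i = 0 ∨ hPh.eigenvalues i = 1 := by
  set v : Fin n → ℂ := ⇑(hPh.eigenvectorBasis i) with hvdef
  have hv : P *ᵥ v = (hPh.eigenvalues i) • v := hPh.mulVec_eigenvectorBasis i
  have h2 : P *ᵥ (P *ᵥ v) = (hPh.eigenvalues i) • ((hPh.eigenvalues i) • v) := by
    rw [hv, mulVec_smul, hv]
  rw [mulVec_mulVec, hPP, hv] at h2
  have hvne : v ≠ 0 := by
    have hnz := hPh.eigenvectorBasis.orthonormal.ne_zero i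
    intro hcon
    exact hnz (by ext j; exact congrFun hcon j)
  obtain ⟨j, hj⟩ := Function.ne_iff.mp hvne
  have hcomp := congrFun h2 j
  simp only [Pi.smul_apply, Complex.real_smul] at hcomp
  have heq : ((hPh.eigenvalues i : ℂ) * v j) * (1 - (hPh.eigenvalues i : ℂ)) = 0 := by
    linear_combination hcomp
  rcases mul_eq_zero.mp heq with h | h
  · rcases mul_eq_zero.mp h with h' | h'
    · left; exact_mod_cast h'
    · exact absurd h' (by simpa using hj)
  · right
    have : (hPh.eigenvalues i : ℂ) = 1 := by linear_combination -h
    exact_mod_cast this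

lemma my_trace_eq_rank {n : ℕ} {A : Matrix (Fin n) (Fin n) ℂ} (hA : A.IsHermitian)
    (h01 : ∀ i, hA.eigenvalues i = 0 ∨ hA.eigenvalues i = 1) : A.trace = (A.rank : ℂ) := by
  rw [my_herm_trace_eq_sum hA, hA.rank_eq_card_non_zero_eigs, Fintype.card_subtype]
  have hfilter : ∑ i ∈ Finset.univ.filter (fun i => hA.eigenvalues i ≠ 0),
      (hA.eigenvalues i : ℂ) = ∑ i, (hA.eigenvalues i : ℂ) :=
    Finset.sum_filter_of_ne (fun i _ h hc => h (by rw [hc]; simp))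
  calc ∑ i, (hA.eigenvalues i : ℂ)
      = ∑ i ∈ Finset.univ.filter (fun i => hA.eigenvalues i ≠ 0), (hA.eigenvalues i : ℂ) :=
        hfilter.symm
  _ = ∑ _i ∈ Finset.univ.filter (fun i => hA.eigenvalues i ≠ 0), (1 : ℂ) :=
        Finset.sum_congr rfl (fun i hi => by
          rcases h01 i with h | h
          · exact absurd h (Finset.mem_filter.mp hi).2
          · exact_mod_cast h)
  _ = _ := by simp


/-- A PSD contraction whose trace equals its rank is a projection. -/
lemma my_psd_contraction_proj {n : ℕ} {Q : Matrix (Fin n) (Fin n) ℂ} (hQ : Q.PosSemidef)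
    (hQ1 : (1 - Q).PosSemidef) (htr : Q.trace = (Q.rank : ℂ)) : Q * Q = Q := by
  set μ := hQ.1.eigenvalues with hμdef
  have hsum : ∑ i, μ i = (Q.rank : ℝ) := by
    have h := my_herm_trace_eq_sum hQ.1
    rw [htr] at h
    exact_mod_cast h.symm
  have hcard : (Q.rank : ℝ) =
      ((Finset.univ.filter (fun i => μ i ≠ 0)).card : ℝ) := by
    rw [hQ.1.rank_eq_card_non_zero_eigs, Fintype.card_subtype]
  have hle1 : ∀ i, μ i ≤ 1 := fun i => my_eig_le_one hQ.1 hQ1 i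
  have hnn : ∀ i, 0 ≤ μ i := fun i => hQ.eigenvalues_nonneg i
  have hfil : ∑ i ∈ Finset.univ.filter (fun i => μ i ≠ 0), μ i = ∑ i, μ i :=
    Finset.sum_filter_ne_zero _
  have hzero : ∑ i ∈ Finset.univ.filter (fun i => μ i ≠ 0), (1 - μ i) = 0 := by
    rw [Finset.sum_sub_distrib, hfil, hsum, Finset.sum_const, nsmul_eq_mul, mul_one, hcard,
      sub_self]
  have hone : ∀ i ∈ Finset.univ.filter (fun i => μ i ≠ 0), (1 : ℝ) - μ i = 0 :=
    (Finset.sum_eq_zero_iff_of_nonneg (fun i _ => by linarith [hle1 i])).mp hzero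
  refine my_herm_mul_self hQ.1 (fun i => ?_)
  by_cases h : μ i = 0
  · exact Or.inl h
  · exact Or.inr (by have := hone i (Finset.mem_filter.mpr ⟨Finset.mem_univ i, h⟩); linarith)

/-- Hermitian idempotent is PSD. -/
lemma my_proj_psd {n : ℕ} {P : Matrix (Fin n) (Fin n) ℂ} (hPh : P.IsHermitian)
    (hPP : P * P = P) : P.PosSemidef := by
  have h : P = Pᴴ * P := by rw [hPh.eq]; exact hPP.symm
  rw [h]
  exact posSemidef_conjTranspose_mul_self P

theorem adjoint_comp_fixes_of_rank_eq {n : ℕ}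
    (E Edag : Matrix (Fin n) (Fin n) ℂ →ₗ[ℂ] Matrix (Fin n) (Fin n) ℂ)
    (hCP : IsCP E)
    (hTP : ∀ X, (E X).trace = X.trace)
    (hU : E 1 = 1)
    (hadj : ∀ σ τ : Matrix (Fin n) (Fin n) ℂ, (Edag σ * τ).trace = (σ * E τ).trace)
    (P : Matrix (Fin n) (Fin n) ℂ)
    (hPh : P.IsHermitian) (hPP : P * P = P)
    (hrank : (E P).rank = P.rank) :
    Edag (E P) = P := by
  obtain ⟨r, K, hK⟩ := hCP
  -- Edag has the adjoint Kraus form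
  have hEdag : ∀ σ, Edag σ = ∑ a, (K a)ᴴ * σ * K a := by
    intro σ
    refine my_trace_ext (fun τ => ?_)
    have h1 : ((∑ a, (K a)ᴴ * σ * K a) * τ).trace = ∑ a, (σ * (K a * τ * (K a)ᴴ)).trace := by
      rw [Finset.sum_mul, Matrix.trace_sum]
      refine Finset.sum_congr rfl (fun a _ => ?_)
      rw [show (K a)ᴴ * σ * K a * τ = (K a)ᴴ * (σ * (K a * τ)) by noncomm_ring,
        Matrix.trace_mul_comm, show σ * (K a * τ) * (K a)ᴴ = σ * (K a * τ * (K a)ᴴ) by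
          noncomm_ring]
    rw [hadj, hK, Finset.mul_sum, Matrix.trace_sum, h1]
  -- trace preservation gives ∑ Kᴴ K = 1
  have hKsum : ∑ a, (K a)ᴴ * K a = 1 := by
    refine my_trace_ext (fun τ => ?_)
    have h1 : ((∑ a, (K a)ᴴ * K a) * τ).trace = ∑ a, (K a * τ * (K a)ᴴ).trace := by
      rw [Finset.sum_mul, Matrix.trace_sum]
      exact Finset.sum_congr rfl (fun a _ => (Matrix.trace_mul_cycle (K a) τ (K a)ᴴ).symm)
    rw [h1, ← Matrix.trace_sum, ← hK, hTP, one_mul]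
  -- E and Edag preserve positivity
  have hEpsd : ∀ X, X.PosSemidef → (E X).PosSemidef := by
    intro X hX
    rw [hK]
    refine Finset.sum_induction _ _ (fun a b ha hb => ha.add hb) PosSemidef.zero
      (fun a _ => hX.mul_mul_conjTranspose_same (K a))
  have hEdagpsd : ∀ X, X.PosSemidef → (Edag X).PosSemidef := by
    intro X hX
    rw [hEdag]
    refine Finset.sum_induction _ _ (fun a b ha hb => ha.add hb) PosSemidef.zero
      (fun a _ => hX.conjTranspose_mul_mul_same (K a))
  have hEdag1 : Edag 1 = 1 := by
    rw [hEdag]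
    simpa only [Matrix.mul_one] using hKsum
  -- facts about 1 - P
  have h1Ph : (1 - P).IsHermitian := isHermitian_one.sub hPh
  have h1PP : (1 - P) * (1 - P) = 1 - P := by
    rw [mul_sub, sub_mul, sub_mul, one_mul, one_mul, mul_one, hPP]
    abel
  -- Q := E P
  set Q := E P with hQdef
  have hQpsd : Q.PosSemidef := hEpsd P (my_proj_psd hPh hPP)
  have h1Qpsd : (1 - Q).PosSemidef := by
    have h1 : (1 : Matrix (Fin n) (Fin n) ℂ) - Q = E (1 - P) := by rw [map_sub, hU]
    rw [h1]
    exact hEpsd _ (my_proj_psd h1Ph h1PP)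
  have hPtr : P.trace = (P.rank : ℂ) := my_trace_eq_rank hPh (my_proj_eigs hPh hPP)
  have hQQ : Q * Q = Q :=
    my_psd_contraction_proj hQpsd h1Qpsd (by rw [hQdef, hTP, hrank, hPtr])
  -- R := Edag Q
  set R := Edag Q with hRdef
  have hRpsd : R.PosSemidef := hEdagpsd Q hQpsd
  have hRtr : R.trace = Q.trace := by
    rw [show R.trace = (R * 1).trace by rw [mul_one], hRdef, hadj, hU, mul_one]
  have hRP0 : R * (1 - P) = 0 := by
    refine my_psd_mul_proj_zero hRpsd h1Ph h1PP ?_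
    rw [mul_sub, mul_one, trace_sub, hRtr, hRdef, hadj, ← hQdef, hQQ]
    exact sub_self _
  have hRP : R = R * P := by
    have h := hRP0
    rw [mul_sub, mul_one] at h
    exact (sub_eq_zero.mp h)
  have hPR : R = P * R := by
    calc R = Rᴴ := hRpsd.1.eq.symm
    _ = (R * P)ᴴ := by rw [← hRP]
    _ = Pᴴ * Rᴴ := conjTranspose_mul _ _
    _ = P * R := by rw [hPh.eq, hRpsd.1.eq]
  have hPRP : P * R * P = R := by rw [mul_assoc, ← hRP, ← hPR]
  -- P - R is PSD with zero trace
  have hPRpsd : (P - R).PosSemidef := by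
    have h1Rpsd : ((1 : Matrix (Fin n) (Fin n) ℂ) - R).PosSemidef := by
      have : (1 : Matrix (Fin n) (Fin n) ℂ) - R = Edag (1 - Q) := by
        rw [map_sub, hEdag1, hRdef]
      rw [this]
      exact hEdagpsd _ h1Qpsd
    have key : P - R = Pᴴ * (1 - R) * P := by
      rw [hPh.eq, mul_sub, sub_mul, mul_one, hPP, hPRP]
    rw [key]
    exact h1Rpsd.conjTranspose_mul_mul_same P
  have htr0 : (P - R).trace = 0 := by
    rw [trace_sub, hRtr, hQdef, hTP, sub_self]
  exact (sub_eq_zero.mp (my_psd_trace_zero hPRpsd htr0)).symm
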